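/- Let ν, ρ, γ > 0 and τ > 0. There exists λ₁ > 0 such that both ν − γτ(1 + λ₁ρ) − γ²τ²ρ > 0 and ρ − γτρ/λ₁ > 0 if and only if τ < 2ν / (γ(√(8νρ + 1) + 1)). -/

import Mathlib

/-- Existence of a parameter `λ₁ > 0` making both degraded passivity indices
positive is equivalent to the sampling-period bound `τ < 2ν/(γ(√(8νρ+1)+1))`. -/
theorem stmt_13 (ν ρ γ τ : ℝ) (hν : 0 < ν) (hρ : 0 < ρ) (hγ : 0 < γ) (hτ : 0 < τ) :
    (∃ lam₁ > 0, 0 < ν - γ * τ * (1 + lam₁ * ρ) - γ ^ 2 * τ ^ 2 * ρ ∧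
        0 < ρ - γ * τ * ρ / lam₁) ↔
      τ < 2 * ν / (γ * (Real.sqrt (8 * ν * ρ + 1) + 1)) := by
  set s := Real.sqrt (8 * ν * ρ + 1) with hs
  have hpos : (0:ℝ) < 8 * ν * ρ + 1 := by positivity
  have hs2 : s ^ 2 = 8 * ν * ρ + 1 := Real.sq_sqrt hpos.le
  have hs1 : 1 < s := by
    nlinarith [Real.sqrt_nonneg (8 * ν * ρ + 1)]
  have hD : 0 < γ * (s + 1) := by positivity
  have key : (∃ lam₁ > 0, 0 < ν - γ * τ * (1 + lam₁ * ρ) - γ ^ 2 * τ ^ 2 * ρ ∧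
        0 < ρ - γ * τ * ρ / lam₁) ↔ 2 * ρ * (γ * τ) ^ 2 + γ * τ < ν := by
    constructor
    · rintro ⟨l, hl, h1, h2⟩
      have h3 : γ * τ * ρ / l < ρ := by linarith
      have h4 : γ * τ < l := by
        rw [div_lt_iff₀ hl] at h3
        have := mul_lt_mul_of_pos_right h3 (inv_pos.mpr hρ)
        calc γ * τ = γ * τ * ρ * ρ⁻¹ := by field_simp
          _ < ρ * l * ρ⁻¹ := this
          _ = l := by field_simp
      nlinarith [mul_pos (mul_pos hγ hτ) hρ]
    · intro h
      have hντ : 0 < ν - γ * τ := by nlinarith [mul_pos (mul_pos hγ hτ) hρ]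
      have hl : 0 < (ν - γ * τ) / (2 * γ * τ * ρ) :=
        div_pos hντ (by positivity)
      refine ⟨(ν - γ * τ) / (2 * γ * τ * ρ), hl, ?_, ?_⟩
      · have heq : γ * τ * ((ν - γ * τ) / (2 * γ * τ * ρ) * ρ) = (ν - γ * τ) / 2 := by
          field_simp
        nlinarith [heq]
      · rw [sub_pos, div_lt_iff₀ hl]
        have heq : ρ * ((ν - γ * τ) / (2 * γ * τ * ρ)) = (ν - γ * τ) / (2 * γ * τ) := by
          field_simp
        rw [heq, lt_div_iff₀ (by positivity : (0:ℝ) < 2 * γ * τ)]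
        nlinarith
  rw [key, lt_div_iff₀ hD]
  constructor
  · intro h
    have hντ : γ * τ < ν := by nlinarith [mul_pos (mul_pos hγ hτ) hρ]
    have hsq : (γ * τ * s) ^ 2 < (2 * ν - γ * τ) ^ 2 := by nlinarith
    have hpos2 : 0 < 2 * ν - γ * τ := by linarith
    nlinarith [mul_pos (mul_pos hγ hτ) (lt_trans one_pos hs1)]
  · intro h
    have hντ : γ * τ < ν := by nlinarith
    nlinarith [sq_nonneg (γ * τ * s - (2 * ν - γ * τ)), mul_pos (mul_pos hγ hτ) (lt_trans one_pos hs1)]
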